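/- Let G be an I-involutive basis (with respect to an involutive division I and monomial order ≼). A polynomial is reducible modulo G for the ordinary polynomial division if and only if it is I-reducible modulo G. -/

import Mathlib

open MvPolynomial

variable {K : Type*} [Field K] {n : ℕ}

/-- The six Gerdt–Blinkov axioms for an involutive division on the monomials
`Fin n →₀ ℕ`, given as a relation `d U u w` (read: `u` is an involutive divisor of `w`
with respect to `U`). -/
def IsInvolutiveDivision (n : ℕ)
    (d : Finset (Fin n →₀ ℕ) → (Fin n →₀ ℕ) → (Fin n →₀ ℕ) → Prop) : Prop :=
  (∀ U u w, d U u w → u ∈ U ∧ u ≤ w) ∧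
  (∀ (U : Finset (Fin n →₀ ℕ)) u, u ∈ U → d U u u) ∧
  (∀ (U : Finset (Fin n →₀ ℕ)) u, u ∈ U →
      ∀ v w : Fin n →₀ ℕ, (d U u (u + v) ∧ d U u (u + w)) ↔ d U u (u + v + w)) ∧
  (∀ (U : Finset (Fin n →₀ ℕ)) u u' w, d U u w → d U u' w → d U u u' ∨ d U u' u) ∧
  (∀ (U : Finset (Fin n →₀ ℕ)) u u' w, d U u u' → d U u' w → d U u w) ∧
  (∀ (U U' : Finset (Fin n →₀ ℕ)) u w, U' ⊆ U → u ∈ U' → d U u w → d U' u w)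

/-- The leading monomial of a polynomial with respect to a monomial order. -/
noncomputable def lmon (m : MonomialOrder (Fin n)) (f : MvPolynomial (Fin n) K) :
    Fin n →₀ ℕ :=
  m.toSyn.symm (f.support.sup (fun a => m.toSyn a))

/-- The set of leading monomials of a finite set of polynomials. -/
noncomputable def lmset (m : MonomialOrder (Fin n)) (G : Finset (MvPolynomial (Fin n) K)) :
    Finset (Fin n →₀ ℕ) :=
  G.image (lmon m)

/-- `f` is involutively reducible modulo `G`: some monomial of `f` admits the leading
monomial of some `g ∈ G` as an involutive divisor with respect to `lm(G)`. -/
def IsInvReducible (d : Finset (Fin n →₀ ℕ) → (Fin n →₀ ℕ) → (Fin n →₀ ℕ) → Prop)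
    (m : MonomialOrder (Fin n)) (G : Finset (MvPolynomial (Fin n) K))
    (f : MvPolynomial (Fin n) K) : Prop :=
  ∃ g ∈ G, ∃ u ∈ f.support, d (lmset m G) (lmon m g) u

/-- One step of involutive reduction modulo `G`: a term `λ·u` of `f` with
`u = lm(g)·v`, `v` involutively multiplicative for `lm(g)`, is replaced using `g`,
giving `f - (λ u / lt(g))·g`. -/
def InvRedStep (d : Finset (Fin n →₀ ℕ) → (Fin n →₀ ℕ) → (Fin n →₀ ℕ) → Prop)
    (m : MonomialOrder (Fin n)) (G : Finset (MvPolynomial (Fin n) K))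
    (f f' : MvPolynomial (Fin n) K) : Prop :=
  ∃ g ∈ G, ∃ u ∈ f.support, d (lmset m G) (lmon m g) u ∧
    f' = f - (monomial (u - lmon m g) (f.coeff u / g.coeff (lmon m g))) * g

/-- `G` is involutively autoreduced with respect to `d` and the monomial order `m`:
the set of leading monomials of `G` is autoreduced, and no non-leading term of an
element of `G` lies in the involutive cone of `lm(G)`. -/
def IsAutoreduced (d : Finset (Fin n →₀ ℕ) → (Fin n →₀ ℕ) → (Fin n →₀ ℕ) → Prop)
    (m : MonomialOrder (Fin n)) (G : Finset (MvPolynomial (Fin n) K)) : Prop :=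
  (∀ a ∈ lmset m G, ∀ b ∈ lmset m G, a ≠ b → ¬ d (lmset m G) a b) ∧
  (∀ g ∈ G, ∀ u ∈ g.support, u ≠ lmon m g → ¬ ∃ a ∈ lmset m G, d (lmset m G) a u)

/-- `G` is an involutive basis with respect to `d` and `m`: it is involutively
autoreduced and every monomial multiple `u·g` of every `g ∈ G` has involutive normal
form `0` modulo `G`. -/
def IsInvBasis (d : Finset (Fin n →₀ ℕ) → (Fin n →₀ ℕ) → (Fin n →₀ ℕ) → Prop)
    (m : MonomialOrder (Fin n)) (G : Finset (MvPolynomial (Fin n) K)) : Prop :=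
  IsAutoreduced d m G ∧
  ∀ g ∈ G, ∀ u : Fin n →₀ ℕ,
    Relation.ReflTransGen (InvRedStep d m G) ((monomial u (1 : K)) * g) 0

lemma le_lmon (m : MonomialOrder (Fin n)) (f : MvPolynomial (Fin n) K)
    {a : Fin n →₀ ℕ} (ha : a ∈ f.support) : m.toSyn a ≤ m.toSyn (lmon m f) := by
  unfold lmon
  rw [AddEquiv.apply_symm_apply]
  exact Finset.le_sup ha

lemma lmon_mem_support (m : MonomialOrder (Fin n)) {f : MvPolynomial (Fin n) K}
    (hf : f ≠ 0) : lmon m f ∈ f.support := by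
  obtain ⟨a, ha, hsup⟩ := Finset.exists_mem_eq_sup f.support
    (by simpa using hf) (fun a => m.toSyn a)
  unfold lmon
  rw [hsup, AddEquiv.symm_apply_apply]
  exact ha

/-- Bounds on the support of `monomial a c * g` when `lmon m g`'s syn bounds `g`. -/
lemma support_mono_mul_le (m : MonomialOrder (Fin n)) (a : Fin n →₀ ℕ) (c : K)
    (g : MvPolynomial (Fin n) K) {x : Fin n →₀ ℕ}
    (hx : x ∈ ((monomial a c) * g).support) :
    m.toSyn x ≤ m.toSyn (a + lmon m g) := by
  rw [mem_support_iff, coeff_monomial_mul'] at hx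
  by_cases hax : a ≤ x
  · rw [if_pos hax] at hx
    have h1 : x - a ∈ g.support := by
      rw [mem_support_iff]
      intro h0
      rw [h0, mul_zero] at hx
      exact hx rfl
    have h2 : m.toSyn (x - a) ≤ m.toSyn (lmon m g) := le_lmon m g h1
    have h3 : x = a + (x - a) := (add_tsub_cancel_of_le hax).symm
    calc m.toSyn x = m.toSyn a + m.toSyn (x - a) := by rw [← map_add, ← h3]
    _ ≤ m.toSyn a + m.toSyn (lmon m g) := by exact add_le_add_right h2 _
    _ = m.toSyn (a + lmon m g) := by rw [map_add]
  · rw [if_neg hax] at hx; exact absurd rfl hx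

/-- The key chain lemma: if `h` reduces involutively to `0`, its coefficient at `u` is
nonzero, and all its monomials are `≼ u`, then `u` has an involutive divisor in `lm G`. -/
lemma chain_lemma (d : Finset (Fin n →₀ ℕ) → (Fin n →₀ ℕ) → (Fin n →₀ ℕ) → Prop)
    (hd : IsInvolutiveDivision n d) (m : MonomialOrder (Fin n))
    (G : Finset (MvPolynomial (Fin n) K)) (u : Fin n →₀ ℕ)
    (h : MvPolynomial (Fin n) K)
    (hchain : Relation.ReflTransGen (InvRedStep d m G) h 0) :
    h.coeff u ≠ 0 → (∀ w ∈ h.support, m.toSyn w ≤ m.toSyn u) →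
    ∃ g ∈ G, d (lmset m G) (lmon m g) u := by
  induction hchain using Relation.ReflTransGen.head_induction_on with
  | refl => intro hc _; simp at hc
  | @head p p' step tail ih =>
    intro hc hb
    obtain ⟨g', hg', w, hw, hdw, hq⟩ := step
    by_cases hwu : w = u
    · exact ⟨g', hg', hwu ▸ hdw⟩
    · -- w ≺ u strictly
      have hwlt : m.toSyn w < m.toSyn u :=
        lt_of_le_of_ne (hb w hw) (fun e => hwu (m.toSyn.injective e))
      have hle : lmon m g' ≤ w := (hd.1 _ _ _ hdw).2
      set a := w - lmon m g' with ha
      have haw : a + lmon m g' = w := tsub_add_cancel_of_le hle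
      set c := p.coeff w / g'.coeff (lmon m g') with hcdef
      have hsupq : ∀ x ∈ ((monomial a c) * g').support, m.toSyn x ≤ m.toSyn w := by
        intro x hx
        have := support_mono_mul_le m a c g' hx
        rwa [haw] at this
      apply ih
      · -- coeff at u unchanged
        rw [hq, coeff_sub]
        have h0 : ((monomial a c) * g').coeff u = 0 := by
          by_contra h0
          have := hsupq u (mem_support_iff.mpr h0)
          exact absurd (lt_of_le_of_lt this hwlt) (lt_irrefl _)
        rw [h0, sub_zero]
        exact hc
      · -- all monomials still ≼ u
        intro x hx
        rw [hq] at hx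
        have := MvPolynomial.support_sub (Fin n) p ((monomial a c) * g') hx
        rw [Finset.mem_union] at this
        rcases this with hx' | hx'
        · exact hb x hx'
        · exact le_of_lt (lt_of_le_of_lt (hsupq x hx') hwlt)

/-- If `G` is an involutive basis, a polynomial is reducible modulo `G` for the ordinary
polynomial division if and only if it is involutively reducible modulo `G`. -/
theorem reducible_iff_inv_reducible
    (d : Finset (Fin n →₀ ℕ) → (Fin n →₀ ℕ) → (Fin n →₀ ℕ) → Prop)
    (hd : IsInvolutiveDivision n d) (m : MonomialOrder (Fin n))
    (G : Finset (MvPolynomial (Fin n) K)) (hG0 : (0 : MvPolynomial (Fin n) K) ∉ G)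
    (hG : IsInvBasis d m G) (f : MvPolynomial (Fin n) K) :
    (∃ g ∈ G, ∃ u ∈ f.support, lmon m g ≤ u) ↔ IsInvReducible d m G f := by
  constructor
  · rintro ⟨g, hg, u, hu, hle⟩
    have hg0 : g ≠ 0 := fun h => hG0 (h ▸ hg)
    set v := u - lmon m g with hv
    have hvu : v + lmon m g = u := tsub_add_cancel_of_le hle
    have hchain := hG.2 g hg v
    -- initial polynomial monomial v 1 * g satisfies the invariant
    have hcoeff : ((monomial v (1 : K)) * g).coeff u ≠ 0 := by
      rw [← hvu, coeff_monomial_mul, one_mul]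
      exact mem_support_iff.mp (lmon_mem_support m hg0)
    have hbound : ∀ w ∈ ((monomial v (1 : K)) * g).support, m.toSyn w ≤ m.toSyn u := by
      intro w hw
      have := support_mono_mul_le m v 1 g hw
      rwa [hvu] at this
    obtain ⟨g', hg', hd'⟩ := chain_lemma d hd m G u _ hchain hcoeff hbound
    exact ⟨g', hg', u, hu, hd'⟩
  · rintro ⟨g, hg, u, hu, hd'⟩
    exact ⟨g, hg, u, hu, (hd.1 _ _ _ hd').2⟩
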